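/- Polynomial Gaussian expectation flow (analytic content of Theorem 4.3): Let T > 0 and let v : [0,T] → [0,∞) be nondecreasing and continuous. Then for every real polynomial Q and all 0 ≤ s ≤ t ≤ T: ∫_ℝ Q(x) d(gaussianReal 0 v(t))(x) − ∫_ℝ Q(x) d(gaussianReal 0 v(s))(x) = (1/2) · ∫_{(s,t]} ( ∫_ℝ Q''(x) d(gaussianReal 0 v(u))(x) ) dμ_v(u), where Q'' is the second derivative of Q; all the integrals appearing are finite since polynomials are integrable against Gaussian measures. -/

import Mathlib

open MeasureTheory ProbabilityTheory Real Set Filter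


noncomputable section
namespace PGEF

/-- bound for |x|^n * exp(-b x^2) -/
lemma pge_bounded (n : ℕ) {b : ℝ} (hb : 0 < b) :
    ∃ C : ℝ, ∀ x : ℝ, |x| ^ n * Real.exp (-b * x ^ 2) ≤ C := by
  set g : ℝ → ℝ := fun x => |x| ^ n * Real.exp (-b * x ^ 2) with hg
  have ht : Tendsto g (cocompact ℝ) (nhds 0) := by
    have := tendsto_rpow_abs_mul_exp_neg_mul_sq_cocompact hb (n : ℝ)
    refine this.congr fun x => ?_
    rw [Real.rpow_natCast]
  have hev : ∀ᶠ x in cocompact ℝ, g x < 1 := ht.eventually_lt_const one_pos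
  rw [Filter.hasBasis_cocompact.eventually_iff] at hev
  obtain ⟨K, hK, hKg⟩ := hev
  have hgc : ContinuousOn g K := (Continuous.mul (by continuity) (by continuity)).continuousOn
  obtain ⟨C, hC⟩ := hK.exists_bound_of_continuousOn hgc
  refine ⟨max C 1, fun x => ?_⟩
  by_cases hx : x ∈ K
  · exact le_trans (le_abs_self _) (le_trans (hC x hx) (le_max_left _ _))
  · exact le_trans (hKg hx).le (le_max_right _ _)

lemma integrable_pow_mul_exp (n : ℕ) {b : ℝ} (hb : 0 < b) :
    Integrable (fun x : ℝ => x ^ n * Real.exp (-b * x ^ 2)) := by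
  obtain ⟨C, hC⟩ := pge_bounded n (half_pos hb)
  have hi : Integrable (fun x : ℝ => C * Real.exp (-(b/2) * x ^ 2)) :=
    (integrable_exp_neg_mul_sq (half_pos hb)).const_mul C
  refine hi.mono ((Continuous.mul (by continuity) (by continuity)).aestronglyMeasurable) (Filter.Eventually.of_forall fun x => ?_)
  have h1 : ‖x ^ n * Real.exp (-b * x ^ 2)‖ = |x| ^ n * Real.exp (-b * x ^ 2) := by
    rw [norm_mul, norm_pow, Real.norm_eq_abs, Real.norm_eq_abs,
      abs_of_pos (Real.exp_pos _)]
  rw [h1]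
  have h2 : Real.exp (-b * x ^ 2) = Real.exp (-(b/2) * x ^ 2) * Real.exp (-(b/2) * x ^ 2) := by
    rw [← Real.exp_add]; ring_nf
  have h3 : |x| ^ n * Real.exp (-b * x ^ 2)
      ≤ C * Real.exp (-(b/2) * x ^ 2) := by
    rw [h2, ← mul_assoc]
    have := hC x
    have h4 : |x| ^ n * Real.exp (-(b/2) * x ^ 2) ≤ C := hC x
    exact mul_le_mul_of_nonneg_right h4 (Real.exp_pos _).le
  calc |x| ^ n * Real.exp (-b * x ^ 2) ≤ C * Real.exp (-(b/2) * x ^ 2) := h3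
    _ ≤ ‖C * Real.exp (-(b/2) * x ^ 2)‖ := le_abs_self _

end PGEF
end
noncomputable section
namespace PGEF

/-- the n-th moment of the standard Gaussian -/
def J (n : ℕ) : ℝ := ∫ x, x ^ n ∂(gaussianReal 0 1)

lemma J_zero : J 0 = 1 := by
  simp [J]

lemma J_odd {n : ℕ} (hn : Odd n) : J n = 0 := by
  have hmap : (gaussianReal 0 1).map (fun x => (-1 : ℝ) * x) = gaussianReal 0 1 := by
    rw [gaussianReal_map_const_mul (-1 : ℝ)]
    norm_num
  have : J n = ∫ x, ((-1 : ℝ) * x) ^ n ∂(gaussianReal 0 1) := by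
    calc J n = ∫ x, x ^ n ∂((gaussianReal 0 1).map (fun x => (-1 : ℝ) * x)) := by
          rw [hmap, J]
      _ = ∫ x, ((-1 : ℝ) * x) ^ n ∂(gaussianReal 0 1) :=
          integral_map ((measurable_const_mul _).aemeasurable)
            ((continuous_pow n).aestronglyMeasurable)
  have h2 : ∫ x, ((-1 : ℝ) * x) ^ n ∂(gaussianReal 0 1)
      = -∫ x, x ^ n ∂(gaussianReal 0 1) := by
    rw [← integral_neg]
    congr 1
    ext x
    rw [mul_pow, hn.neg_one_pow]
    ring
  rw [h2] at this
  change J n = - J n at this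
  linarith

end PGEF
end


noncomputable section
namespace PGEF

lemma integral_gaussianReal_one (g : ℝ → ℝ) :
    ∫ x, g x ∂(gaussianReal 0 1) = ∫ x, gaussianPDFReal 0 1 x * g x := by
  rw [gaussianReal_of_var_ne_zero 0 one_ne_zero]
  have h1 : (gaussianPDF 0 1) = fun x => ((gaussianPDFReal 0 1 x).toNNReal : ENNReal) := by
    ext x
    rfl
  rw [h1, integral_withDensity_eq_integral_smul
    ((measurable_gaussianPDFReal 0 1).real_toNNReal) g]
  congr 1
  ext x
  rw [NNReal.smul_def, smul_eq_mul, Real.coe_toNNReal _ (gaussianPDFReal_nonneg 0 1 x)]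

lemma gaussianPDFReal_one (x : ℝ) :
    gaussianPDFReal 0 1 x = (Real.sqrt (2 * π))⁻¹ * Real.exp (-(1/2 : ℝ) * x ^ 2) := by
  rw [gaussianPDFReal]
  push_cast
  rw [mul_one, sub_zero]
  congr 1
  ring_nf

lemma J_eq (n : ℕ) :
    J n = (Real.sqrt (2 * π))⁻¹ * ∫ x, x ^ n * Real.exp (-(1/2 : ℝ) * x ^ 2) := by
  rw [J, integral_gaussianReal_one, ← integral_const_mul]
  congr 1
  ext x
  rw [gaussianPDFReal_one]
  ring

lemma K_rec (n : ℕ) :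
    ∫ x, x ^ (n + 2) * Real.exp (-(1/2 : ℝ) * x ^ 2)
      = (n + 1 : ℝ) * ∫ x, x ^ n * Real.exp (-(1/2 : ℝ) * x ^ 2) := by
  set E : ℝ → ℝ := fun x => Real.exp (-(1/2 : ℝ) * x ^ 2) with hE
  set f : ℝ → ℝ := fun x => x ^ (n + 1) * E x with hf
  set f' : ℝ → ℝ := fun x => (n + 1 : ℝ) * x ^ n * E x - x ^ (n + 2) * E x with hf'
  have hb : (0:ℝ) < 1/2 := by norm_num
  have hd : ∀ x : ℝ, HasDerivAt f (f' x) x := by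
    intro x
    have h2 : HasDerivAt (fun y : ℝ => -(1/2 : ℝ) * y ^ 2) (-(1/2 : ℝ) * (2 * x)) x := by
      simpa using (hasDerivAt_pow 2 x).const_mul (-(1/2 : ℝ))
    have h3 : HasDerivAt E (E x * (-(1/2 : ℝ) * (2 * x))) x := by
      simpa [hE, mul_comm] using h2.exp
    have h4 : HasDerivAt (fun y => y ^ (n + 1) * E y)
        (((n + 1 : ℕ) : ℝ) * x ^ (n + 1 - 1) * E x + x ^ (n + 1) * (E x * (-(1/2 : ℝ) * (2 * x)))) x :=
      (hasDerivAt_pow (n + 1) x).mul h3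
    convert h4 using 1
    simp only [hE, hf']
    push_cast
    ring
  have hint : ∀ m : ℕ, Integrable (fun x : ℝ => x ^ m * E x) := by
    intro m
    simpa [hE] using integrable_pow_mul_exp m hb
  have hint' : Integrable f' := by
    have := (((hint n).const_mul ((n:ℝ)+1)).sub (hint (n + 2)))
    refine this.congr (Filter.Eventually.of_forall fun x => ?_)
    simp [hf']
    ring
  have ht : Tendsto f (cocompact ℝ) (nhds 0) := by
    have hnorm : ∀ x : ℝ, ‖f x‖ = |x| ^ (n+1) * Real.exp (-(1/2 : ℝ) * x ^ 2) := by
      intro x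
      rw [hf]
      rw [norm_mul, norm_pow, Real.norm_eq_abs, Real.norm_eq_abs,
        abs_of_pos (Real.exp_pos _)]
    have htend : Tendsto (fun x : ℝ => |x| ^ (n+1) * Real.exp (-(1/2 : ℝ) * x ^ 2))
        (cocompact ℝ) (nhds 0) := by
      have := tendsto_rpow_abs_mul_exp_neg_mul_sq_cocompact hb (((n + 1 : ℕ) : ℝ))
      refine this.congr fun x => ?_
      rw [Real.rpow_natCast]
    exact squeeze_zero_norm (fun x => (hnorm x).le) htend
  have htop : Tendsto f atTop (nhds 0) := ht.mono_left (by rw [cocompact_eq_atBot_atTop]; exact le_sup_right)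
  have hbot : Tendsto f atBot (nhds 0) := ht.mono_left (by rw [cocompact_eq_atBot_atTop]; exact le_sup_left)
  have hIoi : ∫ x in Ioi (0:ℝ), f' x = 0 - f 0 :=
    integral_Ioi_of_hasDerivAt_of_tendsto' (fun x _ => hd x) hint'.integrableOn htop
  have hIic : ∫ x in Iic (0:ℝ), f' x = f 0 - 0 :=
    integral_Iic_of_hasDerivAt_of_tendsto' (fun x _ => hd x) hint'.integrableOn hbot
  have htot : ∫ x, f' x = 0 := by
    rw [← intervalIntegral.integral_Iic_add_Ioi hint'.integrableOn hint'.integrableOn, hIoi, hIic]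
    ring
  have i1 : Integrable (fun x : ℝ => (n + 1 : ℝ) * x ^ n * E x) := by
    have := (hint n).const_mul ((n:ℝ)+1)
    refine this.congr (Filter.Eventually.of_forall fun x => ?_)
    ring
  have hsplit : ∫ x, f' x
      = (n + 1 : ℝ) * (∫ x, x ^ n * E x) - ∫ x, x ^ (n + 2) * E x := by
    have h5 : ∫ x, f' x = (∫ x, (n + 1 : ℝ) * x ^ n * E x) - ∫ x, x ^ (n + 2) * E x := by
      rw [hf']
      exact integral_sub i1 (hint (n + 2))
    rw [h5]
    congr 1
    rw [← integral_const_mul]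
    congr 1
    ext x
    ring
  rw [htot] at hsplit
  linarith

lemma J_rec (n : ℕ) : J (n + 2) = (n + 1 : ℝ) * J n := by
  rw [J_eq, J_eq, K_rec]
  ring

end PGEF
end

noncomputable section
namespace PGEF

lemma integrable_pow_gaussianReal (n : ℕ) (w : NNReal) :
    Integrable (fun x : ℝ => x ^ n) (gaussianReal 0 w) := by
  by_cases hw : w = 0
  · subst hw
    rw [gaussianReal_zero_var]
    refine ⟨(continuous_pow n).aestronglyMeasurable, ?_⟩
    rw [HasFiniteIntegral, lintegral_dirac]
    exact ENNReal.coe_lt_top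
  · rw [gaussianReal_of_var_ne_zero 0 hw]
    have h1 : (gaussianPDF 0 w) = fun x => ((gaussianPDFReal 0 w x).toNNReal : ENNReal) := by
      ext x; rfl
    rw [h1, integrable_withDensity_iff_integrable_smul
      ((measurable_gaussianPDFReal 0 w).real_toNNReal)]
    have hwpos : (0:ℝ) < (w : ℝ) := by
      exact_mod_cast pos_iff_ne_zero.mpr hw
    have hb : (0:ℝ) < 1 / (2 * (w:ℝ)) := by positivity
    have key : Integrable (fun x : ℝ =>
        (Real.sqrt (2 * π * (w:ℝ)))⁻¹ * (x ^ n * Real.exp (-(1/(2*(w:ℝ))) * x ^ 2))) :=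
      (integrable_pow_mul_exp n hb).const_mul _
    refine key.congr (Filter.Eventually.of_forall fun x => ?_)
    show (Real.sqrt (2 * π * (w:ℝ)))⁻¹ * (x ^ n * Real.exp (-(1/(2*(w:ℝ))) * x ^ 2))
      = (gaussianPDFReal 0 w x).toNNReal • x ^ n
    rw [NNReal.smul_def, smul_eq_mul, Real.coe_toNNReal _ (gaussianPDFReal_nonneg 0 w x),
      gaussianPDFReal]
    rw [sub_zero]
    have harg : -x ^ 2 / (2 * (w:ℝ)) = -(1/(2*(w:ℝ))) * x ^ 2 := by ring
    rw [harg]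
    ring

lemma integrable_eval (Q : Polynomial ℝ) (w : NNReal) :
    Integrable (fun x : ℝ => Q.eval x) (gaussianReal 0 w) := by
  induction Q using Polynomial.induction_on' with
  | add p q hp hq => simpa [Polynomial.eval_add, Pi.add_def] using hp.add hq
  | monomial n c =>
      have := (integrable_pow_gaussianReal n w).const_mul c
      refine this.congr (Filter.Eventually.of_forall fun x => ?_)
      simp [Polynomial.eval_monomial]

def G (Q : Polynomial ℝ) (a : ℝ) : ℝ := ∫ x, Q.eval x ∂(gaussianReal 0 a.toNNReal)

lemma pow_integral_scaling (n : ℕ) (a : ℝ) :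
    ∫ x, x ^ n ∂(gaussianReal 0 a.toNNReal) = (Real.sqrt a) ^ n * J n := by
  rcases le_or_gt a 0 with ha | ha
  · rw [Real.toNNReal_of_nonpos ha, gaussianReal_zero_var,
      integral_dirac (fun x : ℝ => x ^ n) 0]
    rcases Nat.eq_zero_or_pos n with rfl | hn
    · simp [J_zero]
    · rw [Real.sqrt_eq_zero'.mpr ha, zero_pow hn.ne']
      simp [zero_pow hn.ne']
  · have hmap : gaussianReal 0 a.toNNReal = (gaussianReal 0 1).map (fun x => Real.sqrt a * x) := by
      rw [gaussianReal_map_const_mul (Real.sqrt a)]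
      congr 1
      · simp
      · rw [mul_one]
        ext
        push_cast
        rw [Real.sq_sqrt ha.le, Real.coe_toNNReal _ ha.le]
    rw [hmap, integral_map ((measurable_const_mul _).aemeasurable)
      ((continuous_pow n).aestronglyMeasurable)]
    simp_rw [mul_pow]
    rw [integral_const_mul]
    rfl

lemma G_monomial (n : ℕ) (c : ℝ) (a : ℝ) :
    G (Polynomial.monomial n c) a = c * ((Real.sqrt a) ^ n * J n) := by
  rw [G]
  simp_rw [Polynomial.eval_monomial]
  rw [integral_const_mul, pow_integral_scaling]

lemma G_add (p q : Polynomial ℝ) (a : ℝ) : G (p + q) a = G p a + G q a := by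
  rw [G, G, G]
  simp_rw [Polynomial.eval_add]
  exact integral_add (integrable_eval p _) (integrable_eval q _)

lemma G_continuous (Q : Polynomial ℝ) : Continuous (G Q) := by
  induction Q using Polynomial.induction_on' with
  | add p q hp hq =>
      have h : G (p + q) = fun a => G p a + G q a := funext (G_add p q)
      rw [h]; exact hp.add hq
  | monomial n c =>
      have h : G (Polynomial.monomial n c) = fun a => c * ((Real.sqrt a) ^ n * J n) :=
        funext (G_monomial n c)
      rw [h]
      exact (continuous_const.mul ((Real.continuous_sqrt.pow n).mul continuous_const))

end PGEF
end

noncomputable section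
namespace PGEF

lemma flow (Q : Polynomial ℝ) {a b : ℝ} (ha : 0 ≤ a) (hab : a ≤ b) :
    G Q b - G Q a = (1/2) * ∫ u in Set.Ioc a b, G (Q.derivative.derivative) u := by
  induction Q using Polynomial.induction_on' with
  | add p q hp hq =>
      rw [Polynomial.derivative_add, Polynomial.derivative_add, G_add, G_add]
      have hip : IntegrableOn (G p.derivative.derivative) (Set.Ioc a b) :=
        (G_continuous _).integrableOn_Ioc
      have hiq : IntegrableOn (G q.derivative.derivative) (Set.Ioc a b) :=
        (G_continuous _).integrableOn_Ioc
      have h1 : ∫ u in Set.Ioc a b, G (p.derivative.derivative + q.derivative.derivative) u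
          = (∫ u in Set.Ioc a b, G p.derivative.derivative u)
            + ∫ u in Set.Ioc a b, G q.derivative.derivative u := by
        rw [show (fun u => G (p.derivative.derivative + q.derivative.derivative) u)
          = fun u => G p.derivative.derivative u + G q.derivative.derivative u
          from funext (G_add _ _)]
        exact integral_add hip hiq
      rw [h1, mul_add]
      linarith [hp, hq]
  | monomial n c =>
      simp only [Polynomial.derivative_monomial, G_monomial]
      rcases n with _ | _ | m
      · simp
      · simp [J_odd odd_one]
      · have hm2 : m + 1 + 1 - 1 - 1 = m := rfl
        have hm1 : m + 1 + 1 - 1 = m + 1 := rfl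
        rw [hm2, hm1]
        rcases Nat.even_or_odd m with he | ho
        · obtain ⟨j, rfl⟩ := he
          set CONST : ℝ := c * ((j + j + 1 + 1 : ℕ) : ℝ) * ((j + j + 1 : ℕ) : ℝ) with hCONST
          have h2 : Set.EqOn (fun u => CONST * (Real.sqrt u ^ (j + j) * J (j + j)))
              (fun u => (CONST * J (j + j)) * u ^ j) (Set.Ioc a b) := by
            intro u hu
            have hu0 : (0:ℝ) ≤ u := le_trans ha (le_of_lt hu.1)
            simp only
            rw [show Real.sqrt u ^ (j + j) = u ^ j by
              rw [← two_mul, pow_mul, Real.sq_sqrt hu0]]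
            ring
          have key : ∫ u in Set.Ioc a b, CONST * (Real.sqrt u ^ (j + j) * J (j + j))
              = (CONST * J (j + j)) * ((b ^ (j + 1) - a ^ (j + 1)) / ((j:ℝ) + 1)) := by
            rw [setIntegral_congr_fun measurableSet_Ioc h2, integral_const_mul]
            congr 1
            rw [← intervalIntegral.integral_of_le hab, integral_pow]
          have hsq : ∀ x : ℝ, 0 ≤ x → Real.sqrt x ^ (j + j + 1 + 1) = x ^ (j + 1) := by
            intro x hx
            rw [show j + j + 1 + 1 = 2 * (j + 1) by ring, pow_mul, Real.sq_sqrt hx]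
          have hJ : J (j + j + 1 + 1) = ((j + j + 1 : ℕ) : ℝ) * J (j + j) := by
            have := J_rec (j + j)
            push_cast at this ⊢
            linarith
          rw [key, hsq b (le_trans ha hab), hsq a ha, hJ, hCONST]
          have hj1 : ((j:ℝ) + 1) ≠ 0 := by positivity
          push_cast
          field_simp
          ring
        · have hJ1 : J (m + 1 + 1) = 0 := J_odd (by rcases ho with ⟨k, hk⟩; exact ⟨k+1, by omega⟩)
          have hJ2 : J m = 0 := J_odd ho
          simp [hJ1, hJ2]
end PGEF
end


noncomputable section
namespace PGEF

lemma level_set (T : ℝ) (v : ℝ → ℝ)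
    (hvmono : MonotoneOn v (Set.Icc (0:ℝ) T))
    (hvcont : ContinuousOn v (Set.Icc (0:ℝ) T))
    {s t : ℝ} (hs : 0 ≤ s) (hst : s ≤ t) (ht : t ≤ T) (r : ℝ) :
    ∃ b', b' ∈ Set.Icc s t ∧ (Set.Ioc s t ∩ {u | v u ≤ r}) = Set.Ioc s b'
      ∧ v b' = min (max r (v s)) (v t) := by
  have hsub : Set.Icc s t ⊆ Set.Icc (0:ℝ) T :=
    fun u hu => ⟨le_trans hs hu.1, le_trans hu.2 ht⟩
  have hmono' : MonotoneOn v (Set.Icc s t) := hvmono.mono hsub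
  have hcont' : ContinuousOn v (Set.Icc s t) := hvcont.mono hsub
  have hvst : v s ≤ v t := hmono' ⟨le_refl s, hst⟩ ⟨hst, le_refl t⟩ hst
  rcases lt_or_ge r (v s) with hr | hr
  · refine ⟨s, ⟨le_refl s, hst⟩, ?_, ?_⟩
    · rw [Set.Ioc_self]
      ext u
      simp only [Set.mem_inter_iff, Set.mem_Ioc, Set.mem_setOf_eq, Set.mem_empty_iff_false,
        iff_false, not_and, and_imp]
      intro hsu hut hvu
      have : v s ≤ v u := hmono' ⟨le_refl s, hst⟩ ⟨hsu.le, hut⟩ hsu.le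
      linarith
    · rw [max_eq_right hr.le, min_eq_left hvst]
  · set S : Set ℝ := Set.Icc s t ∩ v ⁻¹' (Set.Iic r) with hS
    have hSclosed : IsClosed S := hcont'.preimage_isClosed_of_isClosed isClosed_Icc isClosed_Iic
    have hSne : s ∈ S := ⟨⟨le_refl s, hst⟩, hr⟩
    have hSbdd : BddAbove S := ⟨t, fun u hu => hu.1.2⟩
    set b' := sSup S with hb'
    have hb'S : b' ∈ S := hSclosed.csSup_mem ⟨s, hSne⟩ hSbdd
    have hsb' : s ≤ b' := le_csSup hSbdd hSne
    have hb't : b' ≤ t := hb'S.1.2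
    have hset : Set.Ioc s t ∩ {u | v u ≤ r} = Set.Ioc s b' := by
      ext u
      simp only [Set.mem_inter_iff, Set.mem_Ioc, Set.mem_setOf_eq]
      constructor
      · rintro ⟨⟨h1, h2⟩, h3⟩
        exact ⟨h1, le_csSup hSbdd ⟨⟨h1.le, h2⟩, h3⟩⟩
      · rintro ⟨h1, h2⟩
        have hu : u ∈ Set.Icc s t := ⟨h1.le, le_trans h2 hb't⟩
        exact ⟨⟨h1, hu.2⟩, le_trans (hmono' hu hb'S.1 h2) hb'S.2⟩
    refine ⟨b', ⟨hsb', hb't⟩, hset, ?_⟩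
    rcases le_or_gt (v t) r with hrt | hrt
    · have htS : t ∈ S := ⟨⟨hst, le_refl t⟩, hrt⟩
      have : b' = t := le_antisymm hb't (le_csSup hSbdd htS)
      rw [this, max_eq_left hr, min_eq_right hrt]
    · rw [max_eq_left hr, min_eq_left hrt.le]
      refine le_antisymm hb'S.2 ?_
      by_contra hlt
      push_neg at hlt
      have hb'lt : b' < t := by
        rcases hb't.lt_or_eq with h | h
        · exact h
        · exfalso; rw [h] at hlt; linarith
      have hcw : ContinuousWithinAt v (Set.Icc s t) b' := hcont' b' ⟨hsb', hb't⟩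
      have h1 : v ⁻¹' (Set.Iio r) ∈ nhdsWithin b' (Set.Icc s t) := hcw (Iio_mem_nhds hlt)
      have hIocmem : Set.Ioc b' t ∈ nhdsWithin b' (Set.Ioi b') := Ioc_mem_nhdsGT hb'lt
      have h2 : Set.Icc s t ∈ nhdsWithin b' (Set.Ioi b') :=
        Filter.mem_of_superset hIocmem (fun u hu => ⟨le_trans hsb' hu.1.le, hu.2⟩)
      have h3 : v ⁻¹' (Set.Iio r) ∈ nhdsWithin b' (Set.Ioi b') :=
        nhdsWithin_le_of_mem h2 h1
      have h4 : (v ⁻¹' (Set.Iio r) ∩ Set.Ioc b' t).Nonempty := by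
        have := Filter.inter_mem h3 hIocmem
        exact Filter.nonempty_of_mem this
      obtain ⟨u, hu1, hu2⟩ := h4
      have hvu : v u < r := hu1
      have huS : u ∈ S := ⟨⟨le_trans hsb' hu2.1.le, hu2.2⟩, hvu.le⟩
      have : u ≤ b' := le_csSup hSbdd huS
      linarith [hu2.1]

end PGEF
end

noncomputable section
namespace PGEF

lemma map_restrict (T : ℝ) (v : ℝ → ℝ)
    (hvmono : MonotoneOn v (Set.Icc (0:ℝ) T))
    (hvcont : ContinuousOn v (Set.Icc (0:ℝ) T))
    (μ : Measure ℝ)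
    (hμ : ∀ a b : ℝ, 0 ≤ a → a ≤ b → b ≤ T →
      μ (Set.Ioc a b) = ENNReal.ofReal (v b - v a))
    {s t : ℝ} (hs : 0 ≤ s) (hst : s ≤ t) (ht : t ≤ T) :
    Measure.map v (μ.restrict (Set.Ioc s t)) = volume.restrict (Set.Ioc (v s) (v t)) := by
  have hsub : Set.Icc s t ⊆ Set.Icc (0:ℝ) T :=
    fun u hu => ⟨le_trans hs hu.1, le_trans hu.2 ht⟩
  have hmono' : MonotoneOn v (Set.Icc s t) := hvmono.mono hsub
  have hvst : v s ≤ v t := hmono' ⟨le_refl s, hst⟩ ⟨hst, le_refl t⟩ hst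
  have hvm : AEMeasurable v (μ.restrict (Set.Ioc s t)) :=
    ((hvcont.mono (fun u hu => hsub ⟨hu.1.le, hu.2⟩)).aemeasurable measurableSet_Ioc)
  have hμst : μ (Set.Ioc s t) = ENNReal.ofReal (v t - v s) := hμ s t hs hst ht
  haveI hfin : IsFiniteMeasure (μ.restrict (Set.Ioc s t)) := by
    constructor
    rw [Measure.restrict_apply_univ, hμst]
    exact ENNReal.ofReal_lt_top
  haveI hfin2 : IsFiniteMeasure (Measure.map v (μ.restrict (Set.Ioc s t))) := by
    constructor
    rw [Measure.map_apply_of_aemeasurable hvm MeasurableSet.univ, Set.preimage_univ,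
      Measure.restrict_apply_univ, hμst]
    exact ENNReal.ofReal_lt_top
  -- key computation of the measure of half lines
  have hlevel : ∀ r : ℝ, μ (Set.Ioc s t ∩ {u | v u ≤ r})
      = ENNReal.ofReal (min (max r (v s)) (v t) - v s) := by
    intro r
    obtain ⟨b', hb'mem, hset, hvb'⟩ := level_set T v hvmono hvcont hs hst ht r
    rw [hset, hμ s b' hs hb'mem.1 (le_trans hb'mem.2 ht), hvb']
  refine Measure.ext_of_Ioc_finite _ _ ?_ ?_
  · rw [Measure.map_apply_of_aemeasurable hvm MeasurableSet.univ, Set.preimage_univ,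
      Measure.restrict_apply_univ, hμst, Measure.restrict_apply_univ, Real.volume_Ioc]
  · intro c d hcd
    rw [Measure.map_apply_of_aemeasurable hvm measurableSet_Ioc,
      Measure.restrict_apply' measurableSet_Ioc,
      Measure.restrict_apply measurableSet_Ioc, Set.Ioc_inter_Ioc, Real.volume_Ioc]
    obtain ⟨bc, hbcmem, hsetc, hvbc⟩ := level_set T v hvmono hvcont hs hst ht c
    obtain ⟨bd, hbdmem, hsetd, hvbd⟩ := level_set T v hvmono hvcont hs hst ht d
    have hdecomp : v ⁻¹' (Set.Ioc c d) ∩ Set.Ioc s t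
        = (Set.Ioc s t ∩ {u | v u ≤ d}) \ (Set.Ioc s t ∩ {u | v u ≤ c}) := by
      ext u
      simp only [Set.mem_inter_iff, Set.mem_preimage, Set.mem_Ioc, Set.mem_diff,
        Set.mem_setOf_eq]
      constructor
      · rintro ⟨⟨h1, h2⟩, h3⟩
        exact ⟨⟨h3, h2⟩, fun h => absurd h.2 (not_le.mpr h1)⟩
      · rintro ⟨⟨h1, h2⟩, h3⟩
        have : ¬ v u ≤ c := fun hc => h3 ⟨h1, hc⟩
        exact ⟨⟨not_le.mp this, h2⟩, h1⟩
    have hbcbd : bc ≤ bd := by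
      have hsubset : Set.Ioc s bc ⊆ Set.Ioc s bd := by
        rw [← hsetc, ← hsetd]
        exact fun u hu => ⟨hu.1, le_trans hu.2 hcd.le⟩
      rcases lt_or_ge s bc with h | h
      · exact ((hsubset ⟨h, le_refl bc⟩).2)
      · exact le_trans h hbdmem.1
    have hdiff : Set.Ioc s bd \ Set.Ioc s bc = Set.Ioc bc bd := by
      ext u
      simp only [Set.mem_diff, Set.mem_Ioc, not_and, not_le]
      constructor
      · rintro ⟨⟨h1, h2⟩, h3⟩
        exact ⟨h3 h1, h2⟩
      · rintro ⟨h1, h2⟩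
        exact ⟨⟨lt_of_le_of_lt hbcmem.1 h1, h2⟩, fun _ => h1⟩
    have hsub_cd : (Set.Ioc s t ∩ {u | v u ≤ c}) ⊆ (Set.Ioc s t ∩ {u | v u ≤ d}) :=
      fun u hu => ⟨hu.1, le_trans hu.2 hcd.le⟩
    have hnm : NullMeasurableSet (Set.Ioc s t ∩ {u | v u ≤ c}) μ := by
      rw [hsetc]; exact measurableSet_Ioc.nullMeasurableSet
    have hfinc : μ (Set.Ioc s t ∩ {u | v u ≤ c}) ≠ ⊤ := by
      rw [hlevel]; exact ENNReal.ofReal_ne_top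
    rw [hdecomp, measure_diff hsub_cd hnm hfinc, hlevel, hlevel]
    have harith : ENNReal.ofReal (min (max d (v s)) (v t) - v s)
        - ENNReal.ofReal (min (max c (v s)) (v t) - v s)
        = ENNReal.ofReal (min d (v t) - max c (v s)) := by
      rw [← ENNReal.ofReal_sub _ (by
        have h1 : v s ≤ max c (v s) := le_max_right _ _
        have h2 : v s ≤ v t := hvst
        simp only [min_def, max_def]
        split_ifs <;> linarith)]
      have hsimp : min (max d (v s)) (v t) - v s - (min (max c (v s)) (v t) - v s)
          = min (max d (v s)) (v t) - min (max c (v s)) (v t) := by ring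
      rw [hsimp]
      rcases le_or_gt (max c (v s)) (min d (v t)) with hcase | hcase
      · simp only [min_def, max_def] at hcase
        congr 1
        have hcd' : c ≤ d := hcd.le
        simp only [min_def, max_def]
        split_ifs at hcase ⊢ <;> linarith
      · simp only [min_def, max_def] at hcase
        have hcd' : c ≤ d := hcd.le
        rw [ENNReal.ofReal_of_nonpos (by
          simp only [min_def, max_def]
          split_ifs at hcase ⊢ <;> linarith),
          ENNReal.ofReal_of_nonpos (by
          simp only [min_def, max_def]
          split_ifs at hcase ⊢ <;> linarith)]
    exact harith

end PGEF
end


open MeasureTheory ProbabilityTheory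

/-- polynomial Gaussian expectation flow.  For a nondecreasing,
nonnegative, continuous variance function `v` on `[0,T]` with Lebesgue–Stieltjes
measure `μ` and any real polynomial `Q`,
`∫ Q dN(0,v(t)) − ∫ Q dN(0,v(s))
  = (1/2) ∫_{(s,t]} (∫ Q'' dN(0,v(u))) dμ(u)`. -/
theorem polynomial_gaussian_expectation_flow
    (T : ℝ) (hT : 0 < T)
    (v : ℝ → ℝ) (hv0 : ∀ t ∈ Set.Icc (0 : ℝ) T, 0 ≤ v t)
    (hvmono : MonotoneOn v (Set.Icc (0 : ℝ) T))
    (hvcont : ContinuousOn v (Set.Icc (0 : ℝ) T))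
    (μ : Measure ℝ)
    (hμ : ∀ a b : ℝ, 0 ≤ a → a ≤ b → b ≤ T →
      μ (Set.Ioc a b) = ENNReal.ofReal (v b - v a))
    (Q : Polynomial ℝ) :
    ∀ s t : ℝ, 0 ≤ s → s ≤ t → t ≤ T →
      (∫ x, Q.eval x ∂(gaussianReal 0 (v t).toNNReal))
          - (∫ x, Q.eval x ∂(gaussianReal 0 (v s).toNNReal))
        = (1 / 2) * ∫ u in Set.Ioc s t,
            (∫ x, (Q.derivative.derivative).eval x
              ∂(gaussianReal 0 (v u).toNNReal)) ∂μ := by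
  intro s t hs hst ht
  have hsIcc : s ∈ Set.Icc (0:ℝ) T := ⟨hs, le_trans hst ht⟩
  have htIcc : t ∈ Set.Icc (0:ℝ) T := ⟨le_trans hs hst, ht⟩
  have hvs0 : 0 ≤ v s := hv0 s hsIcc
  have hvst : v s ≤ v t := hvmono hsIcc htIcc hst
  have hflow := PGEF.flow Q hvs0 hvst
  have hmap := PGEF.map_restrict T v hvmono hvcont μ hμ hs hst ht
  have hsub : Set.Icc s t ⊆ Set.Icc (0:ℝ) T :=
    fun u hu => ⟨le_trans hs hu.1, le_trans hu.2 ht⟩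
  have hvm : AEMeasurable v (μ.restrict (Set.Ioc s t)) :=
    ((hvcont.mono (fun u hu => hsub ⟨hu.1.le, hu.2⟩)).aemeasurable measurableSet_Ioc)
  have hint : ∫ u in Set.Ioc s t, PGEF.G (Q.derivative.derivative) (v u) ∂μ
      = ∫ w in Set.Ioc (v s) (v t), PGEF.G (Q.derivative.derivative) w := by
    rw [← hmap, integral_map hvm ((PGEF.G_continuous _).aestronglyMeasurable)]
  show PGEF.G Q (v t) - PGEF.G Q (v s)
    = (1 / 2) * ∫ u in Set.Ioc s t, PGEF.G (Q.derivative.derivative) (v u) ∂μ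
  rw [hflow, hint]
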